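/- arXiv:2507.00255 — 4 statements merged into one kernel-verified Lean document; each statement's English description precedes it below -/
import Mathlib

section
/- Let N, τ be positive integers, let Γ₁,…,Γ_τ and E₁,…,E_τ be skew-Hermitian N×N complex matrices, and set V_k = exp(Γ_k), D_k = ∫₀¹ exp((1−s)Γ_k) · E_k · exp(sΓ_k) ds, U = V_τ ⋯ V₁, and X_k = V_τ ⋯ V_{k+1} · D_k · V_{k−1} ⋯ V₁ (empty products being the identity). Let U_f be a unitary N×N matrix. If the gate fidelity is perfect, i.e. (1/N)|tr(U_fᴴ U)| = 1, then the differential sensitivity vanishes: ∑_{k=1}^{τ} Re( tr(U_fᴴ X_k) · tr(Uᴴ U_f) ) = 0. -/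
open Matrix NormedSpace Finset

attribute [local instance] Matrix.linftyOpNormedRing Matrix.linftyOpNormedAlgebra

/-- The ordered product `f (b-1) * f (b-2) * ⋯ * f a` of matrices (the identity
when `b ≤ a`), with later factors on the left. -/
noncomputable def ordProd {N : ℕ} (f : ℕ → Matrix (Fin N) (Fin N) ℂ) (a b : ℕ) :
    Matrix (Fin N) (Fin N) ℂ :=
  (((List.range' a (b - a)).reverse).map f).prod

lemma ordProd_self {N : ℕ} (f : ℕ → Matrix (Fin N) (Fin N) ℂ) (a : ℕ) :
    ordProd f a a = 1 := by
  simp [ordProd]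

lemma ordProd_succ {N : ℕ} (f : ℕ → Matrix (Fin N) (Fin N) ℂ) {a b : ℕ} (h : a ≤ b) :
    ordProd f a (b + 1) = f b * ordProd f a b := by
  unfold ordProd
  rw [show b + 1 - a = (b - a) + 1 from by omega, List.range'_concat,
    List.reverse_append, List.map_append, List.prod_append,
    show a + 1 * (b - a) = b from by omega]
  simp

lemma ordProd_split {N : ℕ} (f : ℕ → Matrix (Fin N) (Fin N) ℂ) {a k b : ℕ}
    (hak : a ≤ k) (hkb : k < b) :
    ordProd f a b = ordProd f (k + 1) b * f k * ordProd f a k := by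
  induction b, hkb using Nat.le_induction with
  | base => rw [ordProd_succ f hak, ordProd_self, one_mul]
  | succ b hb ih =>
      rw [ordProd_succ f (le_trans hak (le_of_lt hb)),
        ordProd_succ f hb, ih, mul_assoc, mul_assoc, mul_assoc]

lemma ordProd_unitary {N : ℕ} (f : ℕ → Matrix (Fin N) (Fin N) ℂ)
    (hf : ∀ k, (f k)ᴴ * f k = 1) {a b : ℕ} (h : a ≤ b) :
    (ordProd f a b)ᴴ * ordProd f a b = 1 := by
  induction b, h using Nat.le_induction with
  | base => simp [ordProd_self]
  | succ b hb ih =>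
      rw [ordProd_succ f hb, conjTranspose_mul, mul_assoc, ← mul_assoc (f b)ᴴ,
        hf b, one_mul, ih]

/-- A unitary matrix with `|tr W| = N` is a scalar multiple of the identity. -/
lemma unitary_trace_max {N : ℕ} (hN : 0 < N) (W : Matrix (Fin N) (Fin N) ℂ)
    (hW : Wᴴ * W = 1) (htr : ‖W.trace‖ = N) :
    W = (W.trace / N) • 1 := by
  set t := W.trace with ht
  have hNR : (0:ℝ) < N := by exact_mod_cast hN
  have hcol : ∀ j, ∑ i, Complex.normSq (W i j) = 1 := by
    intro j
    have h1 := congrFun (congrFun hW j) j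
    simp only [Matrix.mul_apply, Matrix.conjTranspose_apply, Matrix.one_apply_eq] at h1
    have : (∑ i, (Complex.normSq (W i j) : ℂ)) = 1 := by
      rw [← h1]; exact Finset.sum_congr rfl fun i _ => by
        rw [Complex.normSq_eq_conj_mul_self]; rfl
    exact_mod_cast this
  have habs1 : ∀ i j, ‖W i j‖ ≤ 1 := by
    intro i j
    have h1 : Complex.normSq (W i j) ≤ 1 := by
      rw [← hcol j]
      exact Finset.single_le_sum (f := fun i => Complex.normSq (W i j))
        (fun i _ => Complex.normSq_nonneg _) (Finset.mem_univ i)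
    rw [← Complex.sq_norm] at h1
    nlinarith [norm_nonneg (W i j)]
  -- each diagonal entry equals t / N
  have hdiag : ∀ i, W i i = t / N := by
    have hle : ∀ i, ((starRingEnd ℂ) t * W i i).re ≤ N := by
      intro i
      calc ((starRingEnd ℂ) t * W i i).re ≤ ‖(starRingEnd ℂ) t * W i i‖ :=
            Complex.re_le_norm _
        _ = ‖t‖ * ‖W i i‖ := by
            rw [norm_mul, Complex.norm_conj]
        _ ≤ N * 1 := by
            rw [htr]; exact mul_le_mul_of_nonneg_left (habs1 i i) hNR.le
        _ = N := mul_one _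
    have hsum : ∑ i, ((starRingEnd ℂ) t * W i i).re = (N:ℝ) * N := by
      have h1 : ∑ i, ((starRingEnd ℂ) t * W i i) = (starRingEnd ℂ) t * t := by
        rw [← Finset.mul_sum]; rfl
      have h2 : (∑ i, ((starRingEnd ℂ) t * W i i)).re = ((starRingEnd ℂ) t * t).re := by
        rw [h1]
      rw [Complex.re_sum] at h2
      rw [h2]
      have h3 : (starRingEnd ℂ) t * t = (((‖t‖)^2 : ℝ) : ℂ) := by
        rw [mul_comm, Complex.mul_conj, Complex.normSq_eq_norm_sq]
      rw [h3, Complex.ofReal_re, htr]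
      ring
    have heach : ∀ i, ((starRingEnd ℂ) t * W i i).re = N := by
      by_contra hc
      push_neg at hc
      obtain ⟨i0, hi0⟩ := hc
      have hi0' : ((starRingEnd ℂ) t * W i0 i0).re < N := lt_of_le_of_ne (hle i0) hi0
      have : ∑ i, ((starRingEnd ℂ) t * W i i).re < ∑ _i : Fin N, (N:ℝ) :=
        Finset.sum_lt_sum (fun i _ => hle i) ⟨i0, Finset.mem_univ i0, hi0'⟩
      rw [hsum] at this
      simp at this
    intro i
    -- z := conj t * W i i has re = N and |z| ≤ N, hence z = N
    set z := (starRingEnd ℂ) t * W i i with hz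
    have hzre : z.re = N := heach i
    have hzabs : ‖z‖ ≤ N := by
      rw [hz, norm_mul, Complex.norm_conj, htr]
      calc (N:ℝ) * ‖W i i‖ ≤ N * 1 :=
            mul_le_mul_of_nonneg_left (habs1 i i) hNR.le
        _ = N := mul_one _
    have him : z.im = 0 := by
      have h1 : (‖z‖)^2 = z.re^2 + z.im^2 := by
        rw [Complex.sq_norm, Complex.normSq_apply]; ring
      nlinarith [norm_nonneg z]
    have hzeq : z = (N:ℂ) := by
      apply Complex.ext <;> simp [hzre, him]
    -- conj t * W i i = N, and t * conj t = N^2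
    have htc : t * (starRingEnd ℂ) t = (N:ℂ)^2 := by
      rw [Complex.mul_conj]
      rw [Complex.normSq_eq_norm_sq, htr]
      push_cast; ring
    have hNe : ((N:ℂ)) ≠ 0 := by exact_mod_cast hN.ne'
    have h5 : (N:ℂ)^2 * W i i = t * (N:ℂ) := by
      have h6 : t * z = t * (N:ℂ) := by rw [hzeq]
      rw [hz, ← mul_assoc, htc] at h6
      exact h6
    have h7 : (N:ℂ) * ((N:ℂ) * W i i) = (N:ℂ) * t := by linear_combination h5
    have h8 : (N:ℂ) * W i i = t := mul_left_cancel₀ hNe h7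
    rw [eq_div_iff hNe, mul_comm]
    exact h8
  -- off-diagonal entries vanish
  have hoff : ∀ i j, i ≠ j → W i j = 0 := by
    intro i j hij
    have hNne : (N:ℝ) ≠ 0 := hNR.ne'
    have h1 : Complex.normSq (W j j) = 1 := by
      rw [hdiag j, Complex.normSq_div]
      rw [Complex.normSq_eq_norm_sq, Complex.normSq_eq_norm_sq, htr, Complex.norm_natCast]
      field_simp
    have h2 := hcol j
    rw [← Finset.add_sum_erase _ _ (Finset.mem_univ j), h1] at h2
    have h3 : ∑ i ∈ Finset.univ.erase j, Complex.normSq (W i j) = 0 := by linarith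
    have h4 := (Finset.sum_eq_zero_iff_of_nonneg
      (fun i _ => Complex.normSq_nonneg (W i j))).mp h3
    have := h4 i (Finset.mem_erase.mpr ⟨hij, Finset.mem_univ i⟩)
    exact Complex.normSq_eq_zero.mp this
  ext i j
  by_cases h : i = j
  · subst h; simp [hdiag i, Matrix.one_apply]
  · simp [hoff i j h, Matrix.one_apply, h]

/-- **Theorem 2.** Perfect gate fidelity implies vanishing
differential sensitivity: with `V k = exp (Γ k)`,
`D k = ∫₀¹ exp((1-s)Γₖ) Eₖ exp(sΓₖ) ds`, `U = V_{τ-1} ⋯ V_0`,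
`X k = V_{τ-1} ⋯ V_{k+1} * D k * V_{k-1} ⋯ V_0`, and `U_f` unitary, if
`(1/N)|tr(U_fᴴ U)| = 1` then `∑ₖ Re(tr(U_fᴴ X k) tr(Uᴴ U_f)) = 0`. -/
theorem vanishing_gate_sensitivity (N τ : ℕ) (hN : 0 < N) (hτ : 0 < τ)
    (Γ E : ℕ → Matrix (Fin N) (Fin N) ℂ)
    (hΓ : ∀ k, (Γ k)ᴴ = -(Γ k)) (hE : ∀ k, (E k)ᴴ = -(E k))
    (V : ℕ → Matrix (Fin N) (Fin N) ℂ) (hV : ∀ k, V k = exp (Γ k))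
    (D : ℕ → Matrix (Fin N) (Fin N) ℂ)
    (hD : ∀ k, D k = ∫ s in (0:ℝ)..1,
      exp (((1 - s : ℝ) : ℂ) • Γ k) * E k * exp ((s : ℂ) • Γ k))
    (U : Matrix (Fin N) (Fin N) ℂ) (hU : U = ordProd V 0 τ)
    (X : ℕ → Matrix (Fin N) (Fin N) ℂ)
    (hX : ∀ k, X k = ordProd V (k + 1) τ * D k * ordProd V 0 k)
    (Uf : Matrix (Fin N) (Fin N) ℂ) (hUf : Ufᴴ * Uf = 1)
    (hfid : (1 / N : ℝ) * ‖(Ufᴴ * U).trace‖ = 1) :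
    ∑ k ∈ Finset.range τ,
      ((Ufᴴ * X k).trace * (Uᴴ * Uf).trace).re = 0 := by
  have hNR : (0:ℝ) < N := by exact_mod_cast hN
  have hNe : ((N:ℂ)) ≠ 0 := by exact_mod_cast hN.ne'
  -- unitarity of the V's and of U
  have hVH : ∀ k, (V k)ᴴ = exp (-(Γ k)) := fun k => by
    rw [hV, ← Matrix.exp_conjTranspose, hΓ]
  have hVu : ∀ k, (V k)ᴴ * V k = 1 := fun k => by
    rw [hVH, hV, ← Matrix.exp_add_of_commute _ _ (Commute.neg_left (Commute.refl (Γ k))),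
      neg_add_cancel, exp_zero]
  have hUu : Uᴴ * U = 1 := by rw [hU]; exact ordProd_unitary V hVu (Nat.zero_le τ)
  have hUUH : U * Uᴴ = 1 := mul_eq_one_comm.mp hUu
  -- W = Uᴴ Uf is unitary with |tr W| = N, hence scalar
  set W := Uᴴ * Uf with hWdef
  have hWH : Wᴴ = Ufᴴ * U := by
    rw [hWdef, conjTranspose_mul, conjTranspose_conjTranspose]
  have hWu : Wᴴ * W = 1 := by
    rw [hWH, hWdef, Matrix.mul_assoc, ← Matrix.mul_assoc U Uᴴ Uf, hUUH, Matrix.one_mul, hUf]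
  have habsW : ‖W.trace‖ = N := by
    have h1 : (Ufᴴ * U).trace = star W.trace := by
      rw [← hWH, Matrix.trace_conjTranspose]
    rw [h1] at hfid
    have h2 : ‖star W.trace‖ = ‖W.trace‖ := Complex.norm_conj _
    rw [h2] at hfid
    field_simp at hfid
    linarith
  have hWscalar := unitary_trace_max hN W hWu habsW
  set c := W.trace / N with hcdef
  have habsc : ‖c‖ = 1 := by
    rw [hcdef, norm_div, habsW, Complex.norm_natCast, div_self hNR.ne']
  have hcc : (starRingEnd ℂ) c * c = 1 := by
    rw [Complex.normSq_eq_conj_mul_self.symm, ← Complex.sq_norm, habsc]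
    norm_num
  have hUfU : Uf = c • U := by
    have h1 : U * W = Uf := by
      rw [hWdef, ← Matrix.mul_assoc, hUUH, Matrix.one_mul]
    rw [← h1, hWscalar, Matrix.mul_smul, Matrix.mul_one]
  have htrW : W.trace = c * N := by
    rw [hWscalar, Matrix.trace_smul, Matrix.trace_one]
    simp [smul_eq_mul]
  -- reduce each term to N * tr(E k) and conclude
  apply Finset.sum_eq_zero
  intro k hk
  rw [Finset.mem_range] at hk
  set Q := ordProd V (k + 1) τ with hQdef
  set P := ordProd V 0 k with hPdef
  have hsplit : U = Q * V k * P := by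
    rw [hU]; exact ordProd_split V (Nat.zero_le k) hk
  have hQu : Qᴴ * Q = 1 := ordProd_unitary V hVu hk
  have hPu : Pᴴ * P = 1 := ordProd_unitary V hVu (Nat.zero_le k)
  have hPP : P * Pᴴ = 1 := mul_eq_one_comm.mp hPu
  have h1 : Uᴴ * X k = Pᴴ * ((V k)ᴴ * (D k * P)) := by
    rw [hsplit, hX k, ← hQdef, ← hPdef]
    simp only [conjTranspose_mul, Matrix.mul_assoc]
    rw [← Matrix.mul_assoc Qᴴ Q, hQu, Matrix.one_mul]
  have htrUX : (Uᴴ * X k).trace = ((V k)ᴴ * D k).trace := by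
    rw [h1, Matrix.trace_mul_comm]
    simp only [Matrix.mul_assoc]
    rw [hPP, Matrix.mul_one]
  -- the integral computation: tr((V k)ᴴ D k) = tr(E k)
  have hcont : Continuous fun s : ℝ =>
      exp (((1 - s : ℝ) : ℂ) • Γ k) * E k * exp ((s : ℂ) • Γ k) := by
    refine Continuous.mul (Continuous.mul ?_ continuous_const) ?_
    · exact exp_continuous.comp
        ((Complex.continuous_ofReal.comp (continuous_const.sub continuous_id)).smul
          continuous_const)
    · exact exp_continuous.comp (Complex.continuous_ofReal.smul continuous_const)
  have hint : @IntervalIntegrable _ PseudoMetricSpace.toUniformSpace.toTopologicalSpace _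
      (fun s : ℝ => exp (((1 - s : ℝ) : ℂ) • Γ k) * E k * exp ((s : ℂ) • Γ k))
      MeasureTheory.volume 0 1 := hcont.intervalIntegrable 0 1
  have hcomm : ∀ x y : ℂ, Commute (x • Γ k) (y • Γ k) := fun x y =>
    ((Commute.refl (Γ k)).smul_left x).smul_right y
  have h3 : ∀ s : ℝ,
      ((V k)ᴴ * (exp (((1 - s : ℝ) : ℂ) • Γ k) * E k * exp ((s : ℂ) • Γ k))).trace
        = (E k).trace := by
    intro s
    have e1 : (V k)ᴴ * exp (((1 - s : ℝ) : ℂ) • Γ k) = exp (((-s : ℝ) : ℂ) • Γ k) := by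
      rw [hVH k, show -(Γ k) = (-1 : ℂ) • Γ k from (neg_one_smul ℂ (Γ k)).symm,
        ← Matrix.exp_add_of_commute _ _ (hcomm _ _), ← add_smul,
        show (-1 : ℂ) + ((1 - s : ℝ) : ℂ) = ((-s : ℝ) : ℂ) from by push_cast; ring]
    have e2 : exp ((s : ℂ) • Γ k) * exp (((-s : ℝ) : ℂ) • Γ k) = 1 := by
      rw [← Matrix.exp_add_of_commute _ _ (hcomm _ _), ← add_smul,
        show (s : ℂ) + ((-s : ℝ) : ℂ) = 0 from by push_cast; ring, zero_smul, exp_zero]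
    rw [← Matrix.mul_assoc, ← Matrix.mul_assoc, e1, Matrix.trace_mul_comm,
      ← Matrix.mul_assoc, e2, Matrix.one_mul]
  have h4 : ((V k)ᴴ * D k).trace = (E k).trace := by
    have hL := ContinuousLinearMap.intervalIntegral_comp_comm
      (LinearMap.toContinuousLinearMap
        ((Matrix.traceLinearMap (Fin N) ℂ ℂ).comp (LinearMap.mulLeft ℂ (V k)ᴴ))) hint
    rw [hD k]
    have h5 : ((V k)ᴴ * ∫ s in (0:ℝ)..1,
        exp (((1 - s : ℝ) : ℂ) • Γ k) * E k * exp ((s : ℂ) • Γ k)).trace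
        = ∫ s in (0:ℝ)..1,
          ((V k)ᴴ * (exp (((1 - s : ℝ) : ℂ) • Γ k) * E k * exp ((s : ℂ) • Γ k))).trace :=
      hL.symm
    rw [h5]
    simp only [h3]
    simp
  -- real part of tr(E k) vanishes
  have hre : ((E k).trace).re = 0 := by
    have h5 : star (E k).trace = -(E k).trace := by
      rw [← Matrix.trace_conjTranspose, hE k, Matrix.trace_neg]
    have h6 : ((E k).trace).re = -(((E k).trace).re) := by
      have := congrArg Complex.re h5
      simpa using this
    linarith
  -- assemble
  have hterm : (Ufᴴ * X k).trace * (Uᴴ * Uf).trace = (N : ℂ) * (E k).trace := by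
    have hUfH : Ufᴴ = (starRingEnd ℂ) c • Uᴴ := by
      rw [hUfU, Matrix.conjTranspose_smul]
      rfl
    rw [hUfH, Matrix.smul_mul, Matrix.trace_smul, ← hWdef, htrW, htrUX, h4]
    have : ((starRingEnd ℂ) c • ((E k).trace)) * (c * N)
        = ((starRingEnd ℂ) c * c) * ((N : ℂ) * (E k).trace) := by
      simp only [smul_eq_mul]; ring
    rw [this, hcc, one_mul]
  rw [hterm]
  simp [Complex.mul_re, hre]
end

section
/- Let N be a positive integer and let U and U_f be unitary N×N complex matrices. If (1/N)|tr(U_fᴴ U)| = 1, then there exists φ ∈ ℝ such that U_f = e^{−iφ} U. -/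
open Matrix

/-- Perfect gate fidelity `(1/N)|tr(U_fᴴ U)| = 1` for unitary
`U`, `U_f` forces agreement up to a global phase: `U_f = e^{-iφ} U`. -/
theorem perfect_gate_fidelity_phase (N : ℕ) (hN : 0 < N)
    (U Uf : Matrix (Fin N) (Fin N) ℂ)
    (hU : Uᴴ * U = 1) (hUf : Ufᴴ * Uf = 1)
    (hfid : (1 / N : ℝ) * ‖(Ufᴴ * U).trace‖ = 1) :
    ∃ φ : ℝ, Uf = Complex.exp (-(φ * Complex.I)) • U := by
  set V := Ufᴴ * U with hV
  have hNR : (0:ℝ) < (N:ℝ) := by exact_mod_cast hN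
  have hUfUf : Uf * Ufᴴ = 1 := mul_eq_one_comm.mp hUf
  have hVU : Vᴴ * V = 1 := by
    rw [hV, conjTranspose_mul, conjTranspose_conjTranspose, Matrix.mul_assoc,
      ← Matrix.mul_assoc Uf, hUfUf, Matrix.one_mul, hU]
  -- column norms are 1
  have hcol : ∀ i, ∑ k, Complex.normSq (V k i) = 1 := by
    intro i
    have h := congrFun (congrFun hVU i) i
    simp only [Matrix.mul_apply, Matrix.conjTranspose_apply, Matrix.one_apply_eq] at h
    have h' : (∑ k, (Complex.normSq (V k i) : ℂ)) = 1 := by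
      rw [← h]
      refine Finset.sum_congr rfl fun k _ => ?_
      rw [Complex.normSq_eq_conj_mul_self]; rfl
    exact_mod_cast h'
  have habs : ∀ i, ‖V i i‖ ≤ 1 := by
    intro i
    have h1 : Complex.normSq (V i i) ≤ 1 := by
      rw [← hcol i]
      exact Finset.single_le_sum (f := fun k => Complex.normSq (V k i))
        (fun k _ => Complex.normSq_nonneg _) (Finset.mem_univ i)
    have := Complex.sq_norm (V i i)
    nlinarith [norm_nonneg (V i i)]
  have htr : ‖V.trace‖ = N := by
    field_simp at hfid; linarith
  set c : ℂ := V.trace / N with hc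
  have htrne : V.trace ≠ 0 := by
    intro h0; rw [h0, norm_zero] at htr; linarith
  have hcabs : ‖c‖ = 1 := by
    rw [hc, norm_div, htr]
    simp [hNR.ne']
  have hcne : c ≠ 0 := by
    intro h; rw [h] at hcabs; simp at hcabs
  -- sum of real parts
  have hsum : ∑ i, ((starRingEnd ℂ) c * V i i).re = N := by
    have : (starRingEnd ℂ) c * V.trace = (N:ℂ) := by
      rw [hc, Matrix.trace]
      rw [map_div₀]
      have : (starRingEnd ℂ) V.trace * V.trace = ((N:ℝ)^2 : ℂ) := by
        rw [Complex.normSq_eq_conj_mul_self.symm]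
        push_cast
        rw [← Complex.sq_norm, htr]
        push_cast; ring
      rw [div_mul_eq_mul_div]
      simp only [Matrix.trace] at this ⊢
      rw [this]
      have hNne : (N:ℂ) ≠ 0 := Nat.cast_ne_zero.mpr hN.ne'
      push_cast
      field_simp
      simp [map_natCast, hNne]
    have h2 := congrArg Complex.re this
    simpa [Matrix.trace, Finset.mul_sum, Complex.re_sum] using h2
  have heach : ∀ i, ((starRingEnd ℂ) c * V i i).re = 1 := by
    have hle : ∀ i ∈ Finset.univ, ((starRingEnd ℂ) c * V i i).re ≤ (1:ℝ) := by
      intro i _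
      calc ((starRingEnd ℂ) c * V i i).re ≤ ‖(starRingEnd ℂ) c * V i i‖ :=
            Complex.re_le_norm _
        _ = ‖V i i‖ := by rw [norm_mul, Complex.norm_conj, hcabs, one_mul]
        _ ≤ 1 := habs i
    have hsum' : ∑ i : Fin N, ((starRingEnd ℂ) c * V i i).re = ∑ _i : Fin N, (1:ℝ) := by
      rw [hsum]; simp
    intro i
    have := (Finset.sum_eq_sum_iff_of_le hle).mp hsum' i (Finset.mem_univ i)
    linarith
  have hdiag : ∀ i, V i i = c := by
    intro i
    set z := (starRingEnd ℂ) c * V i i with hz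
    have hzabs : ‖z‖ ≤ 1 := by
      rw [hz, norm_mul, Complex.norm_conj, hcabs, one_mul]; exact habs i
    have hzre : z.re = 1 := heach i
    have hz1 : z = 1 := by
      have h1 : Complex.normSq z ≤ 1 := by
        have := Complex.sq_norm z
        nlinarith [norm_nonneg z]
      have him : z.im = 0 := by
        have := Complex.normSq_apply z
        nlinarith [sq_nonneg z.im]
      apply Complex.ext <;> simp [hzre, him]
    have : c * z = c * 1 := by rw [hz1]
    rw [hz, ← mul_assoc, Complex.mul_conj', mul_one] at this
    have hcn : ‖c‖ = 1 := hcabs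
    rw [hcn] at this
    simpa using this
  have hoff : ∀ k i, k ≠ i → V k i = 0 := by
    intro k i hki
    have h1 : Complex.normSq (V i i) = 1 := by
      rw [hdiag i, ← Complex.sq_norm, hcabs]; norm_num
    have h2 : ∑ j ∈ Finset.univ.erase i, Complex.normSq (V j i) = 0 := by
      have := hcol i
      rw [← Finset.add_sum_erase _ _ (Finset.mem_univ i), h1] at this
      linarith
    have h3 := Finset.sum_eq_zero_iff_of_nonneg
      (fun j _ => Complex.normSq_nonneg (V j i)) |>.mp h2 k
      (Finset.mem_erase.mpr ⟨hki, Finset.mem_univ k⟩)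
    exact Complex.normSq_eq_zero.mp h3
  have hVc : V = c • (1 : Matrix (Fin N) (Fin N) ℂ) := by
    ext k i
    by_cases h : k = i
    · subst h; simp [hdiag k, Matrix.one_apply_eq]
    · simp [hoff k i h, Matrix.one_apply_ne h]
  -- U = c • Uf
  have hUc : U = c • Uf := by
    have := congrArg (fun M => Uf * M) hVc
    simp only [hV] at this
    rw [← Matrix.mul_assoc, hUfUf, Matrix.one_mul, Matrix.mul_smul, Matrix.mul_one] at this
    exact this
  refine ⟨c.arg, ?_⟩
  have hcexp : Complex.exp (c.arg * Complex.I) = c := by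
    have := Complex.norm_mul_exp_arg_mul_I c
    rwa [hcabs, Complex.ofReal_one, one_mul] at this
  rw [hUc, smul_smul, Complex.exp_neg, hcexp, inv_mul_cancel₀ hcne, one_smul]
end

section
/- Let Γ be an N×N complex matrix admitting a spectral decomposition Γ = ∑_{p=1}^{N} iλ_p Π_p, where λ₁,…,λ_N are real numbers and Π₁,…,Π_N are N×N matrices satisfying Π_pᴴ = Π_p, Π_p Π_q = 0 for p ≠ q, Π_p Π_p = Π_p, and ∑_{p=1}^{N} Π_p = I. Then for any N×N complex matrices σ_n and σ_m, ∫₀¹ tr( exp(−sΓ) · σ_n · exp(sΓ) · σ_mᴴ ) ds = ∑_{p,q=1}^{N} tr( Π_q σ_n Π_p σ_mᴴ ) · e^{i(λ_p−λ_q)/2} · sinc((λ_p−λ_q)/2). -/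
open Matrix NormedSpace Finset

/-- The unnormalized cardinal sine function, `sinc x = sin x / x` with `sinc 0 = 1`. -/
noncomputable def sinc (x : ℝ) : ℝ := if x = 0 then 1 else Real.sin x / x

set_option maxHeartbeats 1000000

attribute [local instance] Matrix.linftyOpNormedRing Matrix.linftyOpNormedAlgebra

lemma pow_spectral {N : ℕ} (lam : Fin N → ℂ) (P : Fin N → Matrix (Fin N) (Fin N) ℂ)
    (horth : ∀ p q, p ≠ q → P p * P q = 0) (hidem : ∀ p, P p * P p = P p) :
    ∀ n : ℕ, (∑ p, lam p • P p) ^ (n + 1) = ∑ p, lam p ^ (n + 1) • P p := by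
  intro n
  induction n with
  | zero => simp
  | succ n ih =>
    rw [pow_succ, ih, Finset.sum_mul_sum]
    refine Finset.sum_congr rfl fun p _ => ?_
    rw [Finset.sum_eq_single p]
    · rw [smul_mul_smul_comm, hidem, ← pow_succ]
    · intro q _ hq
      simp [smul_mul_smul_comm, horth p q (Ne.symm hq)]
    · intro h; exact absurd (Finset.mem_univ p) h

lemma scalar_tail (a : ℂ) :
    ∑' n : ℕ, ((Nat.factorial (n+1) : ℂ)⁻¹ * a ^ (n + 1)) = Complex.exp a - 1 := by
  have hs : Summable (fun n : ℕ => ((Nat.factorial n : ℂ))⁻¹ • a ^ n) := expSeries_summable' a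
  have h0 := Summable.tsum_eq_zero_add hs
  have hexp : Complex.exp a = ∑' n : ℕ, ((Nat.factorial n : ℂ))⁻¹ • a ^ n := by
    rw [Complex.exp_eq_exp_ℂ, exp_eq_tsum (𝕂 := ℂ)]
  simp only [smul_eq_mul] at h0 hexp
  rw [hexp, h0]
  simp

lemma exp_spectral {N : ℕ} (lam : Fin N → ℂ) (P : Fin N → Matrix (Fin N) (Fin N) ℂ)
    (horth : ∀ p q, p ≠ q → P p * P q = 0) (hidem : ∀ p, P p * P p = P p)
    (hsum : ∑ p, P p = 1) :
    exp (∑ p, lam p • P p) = ∑ p, Complex.exp (lam p) • P p := by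
  have hsummable : Summable (fun n : ℕ =>
      ((Nat.factorial n : ℂ))⁻¹ • (∑ p, lam p • P p) ^ n) := expSeries_summable' _
  rw [exp_eq_tsum (𝕂 := ℂ)]; beta_reduce; rw [Summable.tsum_eq_zero_add hsummable]
  have hterm : ∀ n : ℕ, ((Nat.factorial (n+1) : ℂ))⁻¹ • (∑ p, lam p • P p) ^ (n+1)
      = ∑ p, (((Nat.factorial (n+1) : ℂ))⁻¹ * lam p ^ (n+1)) • P p := by
    intro n
    rw [pow_spectral lam P horth hidem n, Finset.smul_sum]
    simp [smul_smul]
  simp only [hterm]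
  rw [Summable.tsum_finsetSum (fun p _ => ?_)]
  · simp only [mul_smul]
    have : ∀ p : Fin N, ∑' n : ℕ, ((Nat.factorial (n+1) : ℂ))⁻¹ • lam p ^ (n+1) • P p
        = (Complex.exp (lam p) - 1) • P p := by
      intro p
      have := Summable.tsum_smul_const (M := Matrix (Fin N) (Fin N) ℂ) (L := SummationFilter.unconditional ℕ)
        (f := fun n : ℕ => ((Nat.factorial (n+1) : ℂ))⁻¹ * lam p ^ (n+1)) ?_ (P p)
      · simp only [mul_smul] at this
        rw [this, scalar_tail]
      · have := (expSeries_summable' (𝕂 := ℂ) (lam p)).comp_injective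
          (Nat.succ_injective)
        simpa [Function.comp_def, smul_eq_mul] using this
    simp only [this, sub_smul, Finset.sum_sub_distrib, one_smul, pow_zero,
      Nat.factorial_zero, Nat.cast_one, inv_one]
    rw [hsum]
    abel
  · have hsc : Summable (fun n : ℕ => ((Nat.factorial (n+1) : ℂ))⁻¹ * lam p ^ (n+1)) := by
      have := (expSeries_summable' (𝕂 := ℂ) (lam p)).comp_injective (Nat.succ_injective)
      simpa [Function.comp_def, smul_eq_mul] using this
    simpa [mul_smul] using hsc.smul_const (P p)

lemma integral_exp_I (a : ℝ) :
    ∫ s in (0:ℝ)..1, Complex.exp (Complex.I * a * s) =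
      Complex.exp (((a / 2 : ℝ) : ℂ) * Complex.I) * ((sinc (a / 2) : ℝ) : ℂ) := by
  rcases eq_or_ne a 0 with h | h
  · simp [h, sinc]
  · have ha : (a : ℂ) ≠ 0 := by exact_mod_cast h
    have hc : (Complex.I * (a : ℂ)) ≠ 0 := mul_ne_zero Complex.I_ne_zero ha
    rw [integral_exp_mul_complex hc, sinc, if_neg (fun h2 => h (by linarith))]
    push_cast
    rw [Complex.sin, mul_one, mul_zero, Complex.exp_zero, neg_mul, Complex.exp_neg]
    have hEne : Complex.exp ((a : ℂ) / 2 * Complex.I) ≠ 0 := Complex.exp_ne_zero _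
    rw [show Complex.I * (a : ℂ) = (a : ℂ)/2 * Complex.I + (a : ℂ)/2 * Complex.I by ring,
      Complex.exp_add]
    field_simp
    ring_nf
    simp [Complex.I_sq]

/-- Matrix elements of the superoperator
`X ↦ ∫₀¹ exp(-sΓ) X exp(sΓ) ds` for a normal `Γ = ∑ₚ iλₚ Πₚ` with spectral
projections `Πₚ`:
`∫₀¹ tr(exp(-sΓ) σₙ exp(sΓ) σₘᴴ) ds
  = ∑_{p,q} tr(Π_q σₙ Π_p σₘᴴ) e^{i(λ_p-λ_q)/2} sinc((λ_p-λ_q)/2)`. -/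
theorem superoperator_matrix_elements (N : ℕ)
    (Γ : Matrix (Fin N) (Fin N) ℂ) (lam : Fin N → ℝ)
    (P : Fin N → Matrix (Fin N) (Fin N) ℂ)
    (hherm : ∀ p, (P p)ᴴ = P p)
    (horth : ∀ p q, p ≠ q → P p * P q = 0)
    (hidem : ∀ p, P p * P p = P p)
    (hsum : ∑ p, P p = 1)
    (hΓ : Γ = ∑ p, (Complex.I * (lam p : ℂ)) • P p)
    (σn σm : Matrix (Fin N) (Fin N) ℂ) :
    (∫ s in (0:ℝ)..1,
        (exp ((-(s : ℂ)) • Γ) * σn * exp ((s : ℂ) • Γ) * σmᴴ).trace) =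
      ∑ p, ∑ q, (P q * σn * P p * σmᴴ).trace *
        Complex.exp ((((lam p - lam q) / 2 : ℝ) : ℂ) * Complex.I) *
          ((sinc ((lam p - lam q) / 2) : ℝ) : ℂ) := by
  have hexpc : ∀ c : ℂ,
      exp (c • Γ) = ∑ p, Complex.exp (c * (Complex.I * (lam p : ℂ))) • P p := by
    intro c
    rw [hΓ, Finset.smul_sum]
    simp_rw [smul_smul]
    exact exp_spectral _ P horth hidem hsum
  have hmerge : ∀ (x y t : ℂ),
      Complex.exp x * Complex.exp y * t = t * Complex.exp (x + y) := by
    intro x y t; rw [Complex.exp_add]; ring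
  set f : Fin N → Fin N → ℝ → ℂ := fun p q s =>
    (P q * σn * P p * σmᴴ).trace *
      Complex.exp (Complex.I * (((lam p - lam q : ℝ)) : ℂ) * (s : ℂ)) with hf
  have key : ∀ s : ℝ,
      (exp ((-(s : ℂ)) • Γ) * σn * exp ((s : ℂ) • Γ) * σmᴴ).trace
        = ∑ p, ∑ q, f p q s := by
    intro s
    rw [hexpc, hexpc]
    simp only [Finset.sum_mul, Finset.mul_sum, smul_mul_assoc, Matrix.mul_smul,
      Matrix.trace_sum, Matrix.trace_smul, smul_eq_mul, smul_smul, hf]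
    refine Finset.sum_congr rfl fun p _ => Finset.sum_congr rfl fun q _ => ?_
    rw [hmerge]
    congr 1
    push_cast
    ring
  have hcont : ∀ p q, Continuous (f p q) := by
    intro p q
    rw [hf]
    fun_prop
  have hint : ∀ p q, IntervalIntegrable (f p q) MeasureTheory.volume 0 1 :=
    fun p q => (hcont p q).intervalIntegrable 0 1
  have hint2 : ∀ p, IntervalIntegrable (fun s : ℝ => ∑ q, f p q s)
      MeasureTheory.volume 0 1 :=
    fun p => (continuous_finset_sum _ (fun q _ => hcont p q)).intervalIntegrable 0 1
  calc (∫ s in (0:ℝ)..1,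
        (exp ((-(s : ℂ)) • Γ) * σn * exp ((s : ℂ) • Γ) * σmᴴ).trace)
      = ∫ s in (0:ℝ)..1, ∑ p, ∑ q, f p q s :=
        intervalIntegral.integral_congr fun s _ => key s
    _ = ∑ p, ∫ s in (0:ℝ)..1, ∑ q, f p q s :=
        intervalIntegral.integral_finset_sum (fun p _ => hint2 p)
    _ = ∑ p, ∑ q, ∫ s in (0:ℝ)..1, f p q s :=
        Finset.sum_congr rfl fun p _ =>
          intervalIntegral.integral_finset_sum (fun q _ => hint p q)
    _ = _ := by
        refine Finset.sum_congr rfl fun p _ => Finset.sum_congr rfl fun q _ => ?_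
        rw [hf]
        simp only []
        rw [intervalIntegral.integral_const_mul, integral_exp_I (lam p - lam q)]
        exact (mul_assoc _ _ _).symm
end

section
/- Let Γ and S be N×N complex matrices. Then the map δ ↦ exp(Γ + δS) from ℝ to the N×N complex matrices is differentiable at δ = 0 with derivative ∫₀¹ exp((1−s)Γ) · S · exp(sΓ) ds; that is, d/dδ exp(Γ + δS) |_{δ=0} = ∫₀¹ exp((1−s)Γ) · S · exp(sΓ) ds. -/
open Matrix NormedSpace

attribute [local instance] Matrix.linftyOpNormedRing Matrix.linftyOpNormedAlgebra

section Aux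

variable {N : ℕ}

local notation "M" => Matrix (Fin N) (Fin N) ℂ

/-- Duhamel's formula for matrices. -/
lemma duhamel_aux (A B : M) :
    exp (A + B) - exp A
      = ∫ s in (0:ℝ)..1,
          exp (((1 - s : ℝ) : ℂ) • (A + B)) * B * exp ((s : ℂ) • A) := by
  have hexp : (exp : M → M) = exp := rfl
  -- the path
  set F : ℝ → M := fun s => exp ((1 - s) • (A + B)) * exp (s • A) with hF
  have key : ∀ s : ℝ, HasDerivAt F
      (-(exp ((1 - s) • (A + B)) * B * exp (s • A))) s := by
    intro s
    have h1 : HasDerivAt (fun u : ℝ => exp (u • (A + B)))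
        ((A + B) * exp ((1 - s) • (A + B))) (1 - s) :=
      hasDerivAt_exp_smul_const' (A + B) (1 - s)
    have hs : HasDerivAt (fun u : ℝ => 1 - u) (-1 : ℝ) s := by
      simpa using (hasDerivAt_id s).const_sub 1
    have h1' : HasDerivAt (fun u : ℝ => exp ((1 - u) • (A + B)))
        ((-1 : ℝ) • ((A + B) * exp ((1 - s) • (A + B)))) s :=
      HasDerivAt.scomp (𝕜 := ℝ) s h1 hs
    have h2 : HasDerivAt (fun u : ℝ => exp (u • A))
        (exp (s • A) * A) s := hasDerivAt_exp_smul_const A s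
    have hprod := h1'.mul h2
    have hc1 : (A + B) * exp ((1 - s) • (A + B))
        = exp ((1 - s) • (A + B)) * (A + B) :=
      (((Commute.refl (A + B)).smul_right (1 - s)).exp_right)
    have hc2 : exp (s • A) * A = A * exp (s • A) :=
      (((Commute.refl A).smul_right s).exp_right).symm.eq
    refine hprod.congr_deriv ?_
    rw [hc1, hc2]
    set E1 := exp ((1 - s) • (A + B))
    set E2 := exp (s • A)
    rw [neg_smul, one_smul]
    noncomm_ring
  have hcont : Continuous fun s : ℝ =>
      -(exp ((1 - s) • (A + B)) * B * exp (s • A)) := by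
    apply Continuous.neg
    exact ((exp_continuous.comp ((continuous_const.sub continuous_id).smul
        continuous_const)).mul continuous_const).mul
      (exp_continuous.comp (continuous_id.smul continuous_const))
  have hint := hcont.intervalIntegrable (μ := MeasureTheory.volume) 0 1
  have hFTC := intervalIntegral.integral_eq_sub_of_hasDerivAt
    (fun s _ => key s) hint
  have hF0 : F 0 = exp (A + B) := by simp [hF]
  have hF1 : F 1 = exp A := by simp [hF]
  rw [intervalIntegral.integral_neg] at hFTC
  have h2 : (∫ s in (0:ℝ)..1, exp ((1 - s) • (A + B)) * B * exp (s • A))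
      = F 0 - F 1 := by
    rw [← neg_neg (∫ s in (0:ℝ)..1,
      exp ((1 - s) • (A + B)) * B * exp (s • A)), hFTC, neg_sub]
  rw [hF0, hF1] at h2
  rw [← h2]
  apply intervalIntegral.integral_congr
  intro s _
  simp only [Complex.coe_smul]

end Aux

/-- Duhamel / Fréchet derivative of the matrix exponential:
`δ ↦ exp(Γ + δS)` is differentiable at `δ = 0` with derivative
`∫₀¹ exp((1-s)Γ) S exp(sΓ) ds`. -/
theorem hasDerivAt_exp_perturbation (N : ℕ) (Γ S : Matrix (Fin N) (Fin N) ℂ) :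
    HasDerivAt (fun δ : ℝ => exp (Γ + (δ : ℂ) • S))
      (∫ s in (0:ℝ)..1, exp (((1 - s : ℝ) : ℂ) • Γ) * S * exp ((s : ℂ) • Γ))
      0 := by
  set g : ℝ → Matrix (Fin N) (Fin N) ℂ := fun δ =>
    ∫ s in (0:ℝ)..1,
      exp (((1 - s : ℝ) : ℂ) • (Γ + (δ : ℂ) • S)) * S * exp ((s : ℂ) • Γ)
    with hg
  have hgcont : Continuous g := by
    apply intervalIntegral.continuous_parametric_intervalIntegral_of_continuous'
    apply Continuous.mul
    apply Continuous.mul _ continuous_const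
    · exact exp_continuous.comp
        (((Complex.continuous_ofReal.comp
            (continuous_const.sub continuous_snd))).smul
          (continuous_const.add
            ((Complex.continuous_ofReal.comp continuous_fst).smul
              continuous_const)))
    · exact exp_continuous.comp
        ((Complex.continuous_ofReal.comp continuous_snd).smul continuous_const)
  have hdiff : ∀ δ : ℝ,
      exp (Γ + (δ : ℂ) • S) - exp (Γ + ((0:ℝ) : ℂ) • S) = δ • g δ := by
    intro δ
    have h := duhamel_aux Γ ((δ : ℂ) • S)
    have heq : ∀ s : ℝ,
        exp (((1 - s : ℝ) : ℂ) • (Γ + (δ : ℂ) • S)) * ((δ : ℂ) • S)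
            * exp ((s : ℂ) • Γ)
          = δ • (exp (((1 - s : ℝ) : ℂ) • (Γ + (δ : ℂ) • S)) * S
            * exp ((s : ℂ) • Γ)) := by
      intro s
      rw [mul_smul_comm, smul_mul_assoc, Complex.coe_smul]
    simp only [Complex.ofReal_zero, zero_smul, add_zero]
    rw [h]
    simp_rw [heq]
    rw [intervalIntegral.integral_smul]
  have hg0 : g 0 = ∫ s in (0:ℝ)..1,
      exp (((1 - s : ℝ) : ℂ) • Γ) * S * exp ((s : ℂ) • Γ) := by
    simp [hg]
  refine hasDerivAt_iff_tendsto_slope.mpr ?_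
  have : ∀ δ ∈ ({(0:ℝ)}ᶜ : Set ℝ),
      slope (fun δ : ℝ => exp (Γ + (δ : ℂ) • S)) 0 δ = g δ := by
    intro δ hδ
    have hδ0 : δ ≠ 0 := hδ
    rw [slope_def_module, hdiff δ, sub_zero, smul_smul,
      inv_mul_cancel₀ hδ0, one_smul]
  rw [← hg0]
  exact Filter.Tendsto.congr'
    (Filter.eventuallyEq_of_mem self_mem_nhdsWithin fun δ hδ => (this δ hδ).symm)
    ((hgcont.continuousAt.tendsto).mono_left nhdsWithin_le_nhds)
end
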